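/- For α > 1/2 and β = (2α−1)/4, there exists a set S of positive integers with Σ_{i∈S} α^i = 2β/(1−α). -/

import Mathlib

/-- Greedy remainder: `rstep α T n` is what remains of `T` after greedily
subtracting powers `α^1, ..., α^n` when possible. -/
noncomputable def rstep (α T : ℝ) : ℕ → ℝ
  | 0 => T
  | n + 1 => if α ^ (n + 1) ≤ rstep α T n then rstep α T n - α ^ (n + 1) else rstep α T n

/-- For `α > 1/2` and `β = (2α-1)/4`, there is a set `S` of positive integers with
`Σ_{i ∈ S} α^i = 2β/(1-α)`. -/
theorem stmt16 (α : ℝ) (hα1 : 1 / 2 < α) (hα2 : α < 1) (β : ℝ)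
    (hβ : β = (2 * α - 1) / 4) :
    ∃ S : Set ℕ, (∀ i ∈ S, 1 ≤ i) ∧
      HasSum (fun i : S => α ^ (i : ℕ)) (2 * β / (1 - α)) := by
  have hα0 : 0 < α := by linarith
  have h1α : 0 < 1 - α := by linarith
  set T : ℝ := 2 * β / (1 - α) with hT
  -- invariant: 0 ≤ r n ≤ α^(n+1)/(1-α)
  have hinv : ∀ n, 0 ≤ rstep α T n ∧ rstep α T n ≤ α ^ (n + 1) / (1 - α) := by
    intro n
    induction n with
    | zero =>
      constructor
      · show (0:ℝ) ≤ T
        rw [hT, hβ]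
        apply div_nonneg _ (le_of_lt h1α)
        linarith
      · show T ≤ α ^ (0 + 1) / (1 - α)
        rw [hT, hβ, pow_one, div_le_div_iff₀ h1α h1α]
        nlinarith
    | succ n ih =>
      have key : α ^ (n + 1) / (1 - α) - α ^ (n + 1) = α ^ (n + 1 + 1) / (1 - α) := by
        field_simp
        ring
      have hle : α ^ (n + 1) ≤ α ^ (n + 1 + 1) / (1 - α) := by
        rw [le_div_iff₀ h1α]
        have e : α ^ (n + 1 + 1) = α ^ (n + 1) * α := by ring
        rw [e]
        nlinarith [pow_pos hα0 (n + 1)]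
      by_cases h : α ^ (n + 1) ≤ rstep α T n
      · simp only [rstep, if_pos h]
        constructor
        · linarith
        · linarith [ih.2]
      · simp only [rstep, if_neg h]
        push_neg at h
        exact ⟨ih.1, le_trans (le_of_lt h) hle⟩
  classical
  set g : ℕ → ℝ := fun j =>
    if 0 < j ∧ α ^ j ≤ rstep α T (j - 1) then α ^ j else 0 with hg
  have hpart : ∀ n, ∑ j ∈ Finset.range (n + 1), g j = T - rstep α T n := by
    intro n
    induction n with
    | zero =>
      simp [hg, rstep]
    | succ n ih =>
      rw [Finset.sum_range_succ, ih]
      have : g (n + 1) = rstep α T n - rstep α T (n + 1) := by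
        by_cases h : α ^ (n + 1) ≤ rstep α T n
        · simp only [hg, rstep, if_pos h]
          rw [if_pos ⟨Nat.succ_pos n, by simpa using h⟩]
          ring
        · simp only [hg, rstep, if_neg h]
          rw [if_neg]
          · ring
          · rintro ⟨-, h'⟩
            exact h (by simpa using h')
      rw [this]; ring
  -- r n → 0
  have hr0 : Filter.Tendsto (fun n => rstep α T n) Filter.atTop (nhds 0) := by
    have hbound : Filter.Tendsto (fun n => α ^ (n + 1) / (1 - α)) Filter.atTop (nhds 0) := by
      have := tendsto_pow_atTop_nhds_zero_of_lt_one (le_of_lt hα0) hα2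
      have h2 := this.comp (Filter.tendsto_add_atTop_nat 1)
      simpa using h2.div_const (1 - α)
    exact squeeze_zero (fun n => (hinv n).1) (fun n => (hinv n).2) hbound
  have hsumg : HasSum g T := by
    rw [hasSum_iff_tendsto_nat_of_nonneg]
    · have h1 : Filter.Tendsto (fun n => ∑ j ∈ Finset.range (n + 1), g j)
          Filter.atTop (nhds T) := by
        simp only [hpart]
        simpa using (tendsto_const_nhds (x := T)).sub hr0
      exact (Filter.tendsto_add_atTop_iff_nat 1).mp h1
    · intro j
      simp only [hg]
      split
      · positivity
      · exact le_refl 0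
  refine ⟨{j : ℕ | 0 < j ∧ α ^ j ≤ rstep α T (j - 1)}, fun i hi => hi.1, ?_⟩
  have : (fun i : {j : ℕ | 0 < j ∧ α ^ j ≤ rstep α T (j - 1)} => α ^ (i : ℕ)) =
      (fun j => α ^ j) ∘ ((↑) : _ → ℕ) := rfl
  rw [this, hasSum_subtype_iff_indicator]
  convert hsumg using 1
  funext j
  by_cases h : j ∈ {j : ℕ | 0 < j ∧ α ^ j ≤ rstep α T (j - 1)}
  · rw [Set.indicator_of_mem h]
    exact (if_pos h).symm
  · rw [Set.indicator_of_notMem h]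
    exact (if_neg h).symm
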